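/- Let G = (V,E), k ∈ ℕ, F' ⊇ F (F the set of edges in cuts of size ≤ k). Let x : E\F' → [0,1] be an integral solution (x_e ∈ {0,1}) satisfying Σ_{e ∈ δ_G(S)\F'} x_e ≥ f_{F'}(S) for all S ⊆ V, where f_{F'}(S) = min(k,|δ_G(S)|) − |δ_G(S) ∩ F'|. Then H = {e : x_e = 1} ∪ F' is a k-EFTS of G: for every A ⊆ E with |A| < k, any two vertices connected in G \ A are connected in H \ A. -/

import Mathlib

open SimpleGraph

/-- The edge boundary of `S`: edges of `G` with exactly one endpoint in `S`. -/
def cutEdges {V : Type*} (G : SimpleGraph V) (S : Set V) : Set (Sym2 V) :=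
  {e | e ∈ G.edgeSet ∧ ∃ u v, e = s(u, v) ∧ u ∈ S ∧ v ∉ S}

private lemma cross_lemma {V : Type*} {G' : SimpleGraph V} {S : Set V} :
    ∀ {u v : V}, G'.Walk u v → u ∈ S → v ∉ S →
      ∃ a b, G'.Adj a b ∧ a ∈ S ∧ b ∉ S := by
  intro u v w
  induction w with
  | nil => intro hu hv; exact absurd hu hv
  | @cons a b c h p ih =>
    intro hu hv
    by_cases hb : b ∈ S
    · exact ih hb hv
    · exact ⟨a, b, h, hu, hb⟩

theorem stmt7 {V : Type*} [Fintype V] (G : SimpleGraph V) (k : ℕ)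
    (F' : Set (Sym2 V)) (hF'sub : F' ⊆ G.edgeSet)
    (hF' : ∀ S : Set V, (cutEdges G S).ncard ≤ k → cutEdges G S ⊆ F')
    (x : Sym2 V → ℝ)
    (hint : ∀ e ∈ G.edgeSet \ F', x e = 0 ∨ x e = 1)
    (hcon : ∀ S : Set V,
      (((min k (cutEdges G S).ncard : ℤ) - ((cutEdges G S ∩ F').ncard : ℤ) : ℤ) : ℝ) ≤
        ∑ᶠ e ∈ (cutEdges G S \ F'), x e) :
    ∀ A ⊆ G.edgeSet, A.ncard < k → ∀ u v : V,
      (fromEdgeSet (G.edgeSet \ A)).Reachable u v →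
      (fromEdgeSet (({e | e ∈ G.edgeSet \ F' ∧ x e = 1} ∪ F') \ A)).Reachable u v := by
  classical
  intro A hAsub hAk u v hreach
  set H' : Set (Sym2 V) := {e | e ∈ G.edgeSet \ F' ∧ x e = 1} ∪ F' with hH'
  by_contra hv
  set S : Set V := {w | (fromEdgeSet (H' \ A)).Reachable u w} with hS
  have hu : u ∈ S := Reachable.refl u
  have hvS : v ∉ S := hv
  have hclosed : ∀ a b : V, (fromEdgeSet (H' \ A)).Adj a b → a ∈ S → b ∈ S := by
    intro a b hab ha
    exact ha.trans hab.reachable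
  -- every edge of cutEdges G S that is in H' must be in A
  have hcutH : ∀ e ∈ cutEdges G S, e ∈ H' → e ∈ A := by
    rintro e ⟨heG, a, b, rfl, haS, hbS⟩ heH'
    by_contra heA
    have hne : a ≠ b := G.ne_of_adj ((G.mem_edgeSet).mp heG)
    have : (fromEdgeSet (H' \ A)).Adj a b := by
      rw [SimpleGraph.fromEdgeSet_adj]
      exact ⟨⟨heH', heA⟩, hne⟩
    exact hbS (hclosed a b this haS)
  -- there is a crossing edge in G \ A
  obtain ⟨a, b, hab, haS, hbS⟩ := cross_lemma hreach.some hu hvS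
  rw [SimpleGraph.fromEdgeSet_adj] at hab
  obtain ⟨⟨habG, habA⟩, habne⟩ := hab
  have hcross : s(a, b) ∈ cutEdges G S := ⟨habG, a, b, rfl, haS, hbS⟩
  have hδfin : (cutEdges G S).Finite := Set.toFinite _
  have hAfin : A.Finite := Set.toFinite _
  by_cases hsize : (cutEdges G S).ncard ≤ k
  · exact habA (hcutH _ hcross (Or.inr (hF' S hsize hcross)))
  · push_neg at hsize
    set T1 : Set (Sym2 V) := cutEdges G S ∩ F' with hT1
    set T2 : Set (Sym2 V) := {e | e ∈ cutEdges G S \ F' ∧ x e = 1} with hT2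
    have hT1A : T1 ⊆ A := fun e ⟨he, heF⟩ => hcutH e he (Or.inr heF)
    have hT2A : T2 ⊆ A := by
      rintro e ⟨⟨he, heF⟩, hx⟩
      exact hcutH e he (Or.inl ⟨⟨he.1, heF⟩, hx⟩)
    have hdisj : Disjoint T1 T2 := by
      rw [Set.disjoint_left]
      rintro e ⟨_, heF⟩ ⟨⟨_, heF'⟩, _⟩
      exact heF' heF
    have hfin : (cutEdges G S \ F').Finite := hδfin.diff
    have hT2fin : T2.Finite := hfin.subset (fun e he => he.1)
    have hT1fin : T1.Finite := hδfin.subset (fun e he => he.1)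
    -- the finsum equals ncard of T2
    have hsum : ∑ᶠ e ∈ (cutEdges G S \ F'), x e = (T2.ncard : ℝ) := by
      rw [finsum_mem_eq_finite_toFinset_sum x hfin]
      have hfilter : T2 = ↑(hfin.toFinset.filter (fun e => x e = 1)) := by
        ext e
        simp only [hT2, Set.mem_setOf_eq, Finset.coe_filter, Set.Finite.mem_toFinset]
      rw [hfilter, Set.ncard_coe_finset]
      rw [← Finset.sum_filter_add_sum_filter_not hfin.toFinset (fun e => x e = 1)]
      have h1 : ∑ e ∈ hfin.toFinset.filter (fun e => x e = 1), x e
          = (hfin.toFinset.filter (fun e => x e = 1)).card := by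
        rw [Finset.sum_congr rfl (fun e he => (Finset.mem_filter.mp he).2)]
        simp
      have h2 : ∑ e ∈ hfin.toFinset.filter (fun e => ¬ x e = 1), x e = 0 := by
        apply Finset.sum_eq_zero
        intro e he
        rw [Finset.mem_filter, Set.Finite.mem_toFinset] at he
        rcases hint e ⟨he.1.1.1, he.1.2⟩ with h | h
        · exact h
        · exact absurd h he.2
      rw [h1, h2, add_zero]
    -- derive contradiction by counting
    have hconS := hcon S
    rw [hsum] at hconS
    have hmin : min (k:ℤ) ((cutEdges G S).ncard:ℤ) = (k:ℤ) := by
      exact min_eq_left (by exact_mod_cast hsize.le)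
    rw [hmin] at hconS
    have hcard : T1.ncard + T2.ncard ≤ A.ncard := by
      rw [← Set.ncard_union_eq hdisj hT1fin hT2fin]
      exact Set.ncard_le_ncard (Set.union_subset hT1A hT2A) hAfin
    have h1 : (k : ℝ) ≤ (T1.ncard : ℝ) + (T2.ncard : ℝ) := by push_cast at hconS ⊢; linarith
    have h2 : ((T1.ncard + T2.ncard : ℕ) : ℝ) ≤ (A.ncard : ℝ) := by exact_mod_cast hcard
    have h3 : ((A.ncard : ℕ) : ℝ) < (k : ℝ) := by exact_mod_cast hAk
    push_cast at h2
    linarith
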